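/- Suppose a probability measure μ on point configurations satisfies μ[N_Δ^k]^{1/k} ≤ c₃ c₂^{|Δ|/k} k / log(1 + k/(c₁|Δ|)) for all bounded Δ and k ∈ ℕ, and let ν be obtained from μ by adding an independent Poisson process with intensity measure bounded by t‖b‖_∞ (points born in time t with rate at most ‖b‖_∞). Then ν[N_Δ^k]^{1/k} ≤ (c₃+1) c₂^{|Δ|/k} k / log(1 + k/(max{c₁, t‖b‖_∞}|Δ|)) for all bounded Δ and k ∈ ℕ. -/

import Mathlib

open MeasureTheory ProbabilityTheory ENNReal

private lemma exp_tsum' (x : ℝ) : ∑' n : ℕ, x ^ n / n.factorial = Real.exp x := by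
  rw [Real.exp_eq_exp_ℝ, NormedSpace.exp_eq_tsum_div]

private lemma pow_le_exp_aux {s : ℝ} (hs : 0 < s) {k : ℕ} (hk : 1 ≤ k) (n : ℕ) :
    (n : ℝ) ^ k ≤ (k / s) ^ k * Real.exp (s * n - k) := by
  rcases Nat.eq_zero_or_pos n with rfl | hn
  · simp only [Nat.cast_zero]
    rw [zero_pow (by omega)]
    positivity
  · have hk0 : (0:ℝ) < k := by exact_mod_cast hk
    have hn0 : (0:ℝ) < n := by exact_mod_cast hn
    have ht : (0:ℝ) < s * n := by positivity
    have hlog : Real.log ((s*n) / k) ≤ (s*n)/k - 1 :=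
      Real.log_le_sub_one_of_pos (by positivity)
    have hkey : (s*n) ^ k ≤ (k:ℝ) ^ k * Real.exp (s*n - k) := by
      have h1 : (k:ℝ) * Real.log (s*n) ≤ (k:ℝ) * Real.log k + (s*n - k) := by
        rw [Real.log_div ht.ne' hk0.ne'] at hlog
        have := mul_le_mul_of_nonneg_left hlog hk0.le
        have hne : (k:ℝ) * ((s*n)/k - 1) = s*n - k := by field_simp
        nlinarith [this]
      have h2 : Real.exp ((k:ℝ) * Real.log (s*n)) = (s*n)^k := by
        rw [Real.exp_nat_mul, Real.exp_log ht]
      have h3 : Real.exp ((k:ℝ) * Real.log k + (s*n - k)) = (k:ℝ)^k * Real.exp (s*n - k) := by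
        rw [Real.exp_add, Real.exp_nat_mul, Real.exp_log hk0]
      rw [← h2, ← h3]
      exact Real.exp_le_exp.2 h1
    have hid : (n:ℝ)^k = (s*n)^k / s^k := by
      rw [mul_pow, mul_comm, mul_div_assoc, div_self (by positivity), mul_one]
    rw [hid, div_pow, div_mul_eq_mul_div]
    gcongr

private lemma poisson_moment {lam : ℝ} (hlam : 0 < lam) {k : ℕ} (hk : 1 ≤ k) :
    Summable (fun n : ℕ => (n:ℝ)^k * (Real.exp (-lam) * lam^n / n.factorial)) ∧
    ∑' n : ℕ, (n:ℝ)^k * (Real.exp (-lam) * lam^n / n.factorial)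
      ≤ (k / Real.log (1 + k / lam)) ^ k := by
  have hk0 : (0:ℝ) < k := by exact_mod_cast hk
  set s := Real.log (1 + k / lam) with hsdef
  have hs : 0 < s := Real.log_pos (by rw [lt_add_iff_pos_right]; positivity)
  set C : ℝ := (k / s) ^ k * Real.exp (-(k:ℝ)) * Real.exp (-lam) with hC
  have hle : ∀ n : ℕ, (n:ℝ)^k * (Real.exp (-lam) * lam^n / n.factorial)
      ≤ C * ((lam * Real.exp s)^n / n.factorial) := by
    intro n
    have h1 := pow_le_exp_aux hs hk n
    have h2 : Real.exp (s * n - k) = Real.exp (-(k:ℝ)) * (Real.exp s)^n := by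
      rw [sub_eq_add_neg, add_comm, Real.exp_add, mul_comm s (n:ℝ), Real.exp_nat_mul]
    have hnn : (0:ℝ) ≤ Real.exp (-lam) * lam^n / n.factorial := by positivity
    calc (n:ℝ)^k * (Real.exp (-lam) * lam^n / n.factorial)
        ≤ ((k/s)^k * Real.exp (s*n - k)) * (Real.exp (-lam) * lam^n / n.factorial) :=
          mul_le_mul_of_nonneg_right h1 hnn
      _ = C * ((lam * Real.exp s)^n / n.factorial) := by
          rw [h2, hC, mul_pow]; ring
  have hnonneg : ∀ n : ℕ, (0:ℝ) ≤ (n:ℝ)^k * (Real.exp (-lam) * lam^n / n.factorial) := by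
    intro n; positivity
  have hsumg : Summable (fun n : ℕ => C * ((lam * Real.exp s)^n / n.factorial)) :=
    (Real.summable_pow_div_factorial (lam * Real.exp s)).mul_left C
  have hsumf : Summable (fun n : ℕ => (n:ℝ)^k * (Real.exp (-lam) * lam^n / n.factorial)) :=
    Summable.of_nonneg_of_le hnonneg hle hsumg
  refine ⟨hsumf, ?_⟩
  have hexps : Real.exp s = 1 + k / lam := Real.exp_log (by positivity)
  have hlamexp : lam * Real.exp s = lam + k := by
    rw [hexps]; field_simp
  calc ∑' n : ℕ, (n:ℝ)^k * (Real.exp (-lam) * lam^n / n.factorial)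
      ≤ ∑' n : ℕ, C * ((lam * Real.exp s)^n / n.factorial) := Summable.tsum_le_tsum hle hsumf hsumg
    _ = C * Real.exp (lam + k) := by
        rw [tsum_mul_left, hlamexp, exp_tsum']
    _ = (k / s) ^ k := by
        rw [hC, mul_assoc, mul_assoc, ← Real.exp_add, ← Real.exp_add]
        have h0 : -(k:ℝ) + (-lam + (lam + k)) = 0 := by ring
        rw [h0, Real.exp_zero, mul_one]

private lemma nullmeas_partition {Ω : Type*} [MeasurableSpace Ω] (μ : Measure Ω)
    [IsProbabilityMeasure μ] (A : ℕ → Set Ω) (hcov : (⋃ n, A n) = Set.univ)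
    (hsum : ∑' n, μ (A n) = 1) (n : ℕ) : NullMeasurableSet (A n) μ := by
  classical
  set B : ℕ → Set Ω := fun m => toMeasurable μ (A m) with hB
  set C : Set Ω := ⋃ m, (if m = n then (∅ : Set Ω) else B m) with hCdef
  have hBmeas : ∀ m, MeasurableSet (B m) := fun m => measurableSet_toMeasurable μ (A m)
  have hsub : ∀ m, A m ⊆ B m := fun m => subset_toMeasurable μ (A m)
  have hCm : MeasurableSet C := by
    refine MeasurableSet.iUnion fun m => ?_
    split
    · exact MeasurableSet.empty
    · exact hBmeas m
  have hCle : μ C ≤ ∑' m, if m = n then 0 else μ (A m) := by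
    refine (measure_iUnion_le _).trans (ENNReal.tsum_le_tsum fun m => ?_)
    split
    · simp
    · exact le_of_eq (measure_toMeasurable (A m))
  have htot : μ (B n ∪ C) = 1 := by
    have hsubu : Set.univ ⊆ B n ∪ C := by
      rw [← hcov]
      rintro x ⟨_, ⟨m, rfl⟩, hxm⟩
      by_cases hmn : m = n
      · exact Or.inl (hsub n (hmn ▸ hxm))
      · refine Or.inr (Set.mem_iUnion.2 ⟨m, ?_⟩)
        simp only [hmn, if_false]
        exact hsub m hxm
    have hge : μ Set.univ ≤ μ (B n ∪ C) := measure_mono hsubu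
    rw [measure_univ] at hge
    exact le_antisymm (prob_le_one : μ (B n ∪ C) ≤ 1) hge
  have hkey : μ (B n ∩ C) = 0 := by
    have h1 : μ (B n ∪ C) + μ (B n ∩ C) = μ (B n) + μ C := measure_union_add_inter _ hCm
    have h2 : μ (B n) + μ C ≤ 1 := by
      have hBn : μ (B n) = μ (A n) := measure_toMeasurable (A n)
      rw [hBn]
      calc μ (A n) + μ C ≤ μ (A n) + ∑' m, if m = n then 0 else μ (A m) :=
            add_le_add le_rfl hCle
        _ = ∑' m, μ (A m) := by
            conv_rhs => rw [ENNReal.tsum_eq_add_tsum_ite n]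
            congr 1
            exact tsum_congr fun m => by by_cases h : m = n <;> simp [h]
        _ = 1 := hsum
    rw [htot] at h1
    have h3 : 1 + μ (B n ∩ C) ≤ 1 + 0 := by
      rw [add_zero, h1]; exact h2
    exact le_antisymm (ENNReal.le_of_add_le_add_left one_ne_top h3) zero_le
  have hdiff : μ (B n \ A n) = 0 := by
    refine measure_mono_null ?_ hkey
    intro x hx
    refine ⟨hx.1, ?_⟩
    have hxu : x ∈ ⋃ m, A m := by rw [hcov]; trivial
    obtain ⟨m, hm⟩ := Set.mem_iUnion.1 hxu
    have hmn : m ≠ n := fun h => hx.2 (h ▸ hm)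
    refine Set.mem_iUnion.2 ⟨m, ?_⟩
    simp only [hmn, if_false]
    exact hsub m hm
  have hAeq : A n =ᵐ[μ] B n := by
    rw [Filter.eventuallyEq_set]
    filter_upwards [measure_eq_zero_iff_ae_notMem.1 hdiff] with x hx
    exact ⟨fun h => hsub n h, fun h => by by_contra hna; exact hx ⟨h, hna⟩⟩
  exact ((hBmeas n).nullMeasurableSet).congr hAeq.symm

private lemma aemeasurable_of_fibers {Ω : Type*} [MeasurableSpace Ω] {μ : Measure Ω}
    {g : Ω → ℕ} (h : ∀ n, NullMeasurableSet {ω | g ω = n} μ) : AEMeasurable g μ := by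
  have hnm : NullMeasurable g μ := by
    intro s _
    have hps : g ⁻¹' s = ⋃ n ∈ s, {ω | g ω = n} := by
      ext ω; simp [Set.mem_preimage, Set.mem_iUnion, eq_comm]
    rw [hps]
    exact NullMeasurableSet.biUnion s.to_countable (fun n _ => h n)
  exact hnm.aemeasurable

private lemma lintegral_pow_eq_tsum {Ω : Type*} [MeasurableSpace Ω] (μ : Measure Ω)
    (g : Ω → ℕ) (hg : Measurable g) (k : ℕ) :
    ∫⁻ ω, (g ω : ℝ≥0∞) ^ k ∂μ = ∑' n : ℕ, (n : ℝ≥0∞) ^ k * μ {ω | g ω = n} := by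
  have hpt : ∀ ω, (g ω : ℝ≥0∞) ^ k
      = ∑' n : ℕ, Set.indicator {ω' | g ω' = n} (fun _ => (n : ℝ≥0∞) ^ k) ω := by
    intro ω
    rw [tsum_eq_single (g ω)]
    · rw [Set.indicator_of_mem (by simp : ω ∈ {ω' | g ω' = g ω})]
    · intro n hn
      exact Set.indicator_of_notMem (fun h => hn (Set.mem_setOf_eq ▸ h).symm) _
  have hms : ∀ n : ℕ, MeasurableSet {ω' | g ω' = n} := fun n => hg (measurableSet_singleton n)
  calc ∫⁻ ω, (g ω : ℝ≥0∞)^k ∂μ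
      = ∫⁻ ω, ∑' n : ℕ, Set.indicator {ω' | g ω' = n} (fun _ => (n:ℝ≥0∞)^k) ω ∂μ :=
        lintegral_congr hpt
    _ = ∑' n : ℕ, ∫⁻ ω, Set.indicator {ω' | g ω' = n} (fun _ => (n:ℝ≥0∞)^k) ω ∂μ :=
        lintegral_tsum fun n => (measurable_const.indicator (hms n)).aemeasurable
    _ = ∑' n : ℕ, (n:ℝ≥0∞)^k * μ {ω | g ω = n} := by
        refine tsum_congr fun n => ?_
        rw [lintegral_indicator (hms n), setLIntegral_const]

private lemma div_mono_denom {a x y : ℝ} (ha : 0 ≤ a) (hx : 0 < x) (hxy : x ≤ y) :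
    a / y ≤ a / x := by
  rw [div_eq_mul_one_div a y, div_eq_mul_one_div a x]
  exact mul_le_mul_of_nonneg_left (one_div_le_one_div_of_le hx hxy) ha

/-- moment bounds of Poisson type are stable under adding an independent
Poisson process with intensity measure bounded by `t‖b‖_∞` times Lebesgue measure.
Here `X ω Δ` are the counts of the original process (distributed according to `μ`),
`Y ω Δ` the counts of the added independent Poisson points (Poisson with parameter
at most `t‖b‖_∞ |Δ|`), and the counts of the evolved process `ν = μ T_t` are
`X ω Δ + Y ω Δ`. -/
theorem stmt19 (d : ℕ) {Ω : Type*} [MeasurableSpace Ω] (P : Measure Ω)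
    [IsProbabilityMeasure P] (c₁ c₂ c₃ t b : ℝ)
    (hc₁ : 1 ≤ c₁) (hc₂ : 1 ≤ c₂) (hc₃ : 1 ≤ c₃) (ht : 0 < t) (hb : 0 < b)
    (X Y : Ω → Set (Fin d → ℝ) → ℕ)
    -- moment bounds for the original process
    (hX : ∀ Δ : Set (Fin d → ℝ), MeasurableSet Δ → 0 < volume Δ → volume Δ < ⊤ →
      ∀ k : ℕ, 1 ≤ k →
        ((∫⁻ ω, (X ω Δ : ℝ≥0∞) ^ k ∂P).toReal) ^ ((1 : ℝ) / k)
          ≤ c₃ * c₂ ^ ((volume Δ).toReal / k) * k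
              / Real.log (1 + k / (c₁ * (volume Δ).toReal)))
    -- the added points form an independent Poisson process with intensity at most `t b`
    (hY : ∀ Δ : Set (Fin d → ℝ), MeasurableSet Δ → 0 < volume Δ → volume Δ < ⊤ →
      ∃ lamΔ : ℝ, 0 < lamΔ ∧ lamΔ ≤ t * b * (volume Δ).toReal ∧
        ∀ n : ℕ, P {ω | Y ω Δ = n}
          = ENNReal.ofReal (Real.exp (-lamΔ) * lamΔ ^ n / n.factorial))
    (hindep : ∀ Δ : Set (Fin d → ℝ), MeasurableSet Δ →
      IndepFun (fun ω => X ω Δ) (fun ω => Y ω Δ) P) :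
    ∀ Δ : Set (Fin d → ℝ), MeasurableSet Δ → 0 < volume Δ → volume Δ < ⊤ →
      ∀ k : ℕ, 1 ≤ k →
        ((∫⁻ ω, ((X ω Δ : ℝ≥0∞) + (Y ω Δ : ℝ≥0∞)) ^ k ∂P).toReal) ^ ((1 : ℝ) / k)
          ≤ (c₃ + 1) * c₂ ^ ((volume Δ).toReal / k) * k
              / Real.log (1 + k / (max c₁ (t * b) * (volume Δ).toReal)) := by
  intro Δ hΔ hV0 hVtop k hk
  have hk0 : (0:ℝ) < k := by exact_mod_cast hk
  have hkne : (k:ℝ) ≠ 0 := hk0.ne'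
  set V := (volume Δ).toReal with hVdef
  have hV : 0 < V := ENNReal.toReal_pos hV0.ne' hVtop.ne
  obtain ⟨lam, hlam, hlamle, hpmf⟩ := hY Δ hΔ hV0 hVtop
  set M := max c₁ (t * b) with hMdef
  have hM0 : (0:ℝ) < M := lt_of_lt_of_le zero_lt_one (le_trans hc₁ (le_max_left _ _))
  set L := Real.log (1 + (k:ℝ) / (M * V)) with hLdef
  have hL : 0 < L := Real.log_pos (by rw [lt_add_iff_pos_right]; positivity)
  have hc₂V : (1:ℝ) ≤ c₂ ^ (V / (k:ℝ)) :=
    Real.one_le_rpow hc₂ (by positivity)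
  have hc₂V0 : (0:ℝ) < c₂ ^ (V / (k:ℝ)) := lt_of_lt_of_le zero_lt_one hc₂V
  have hRHSnn : 0 ≤ (c₃ + 1) * c₂ ^ (V / (k:ℝ)) * k / L := by
    apply div_nonneg _ hL.le
    positivity
  by_cases hI : (∫⁻ ω, ((X ω Δ : ℝ≥0∞) + (Y ω Δ : ℝ≥0∞)) ^ k ∂P) = ⊤
  · rw [hI, ENNReal.toReal_top, Real.zero_rpow (by positivity : (1:ℝ)/k ≠ 0)]
    exact hRHSnn
  -- a.e.-measurability of Y from the Poisson distribution hypothesis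
  have hcov : (⋃ n, {ω | Y ω Δ = n}) = Set.univ := by
    ext ω; simp
  have hpmfpos : ∀ n : ℕ, 0 ≤ Real.exp (-lam) * lam ^ n / n.factorial := by
    intro n; positivity
  have hpmfsum : Summable (fun n : ℕ => Real.exp (-lam) * lam ^ n / n.factorial) := by
    have h := (Real.summable_pow_div_factorial lam).mul_left (Real.exp (-lam))
    refine h.congr fun n => ?_
    ring
  have hsum1 : ∑' n : ℕ, P {ω | Y ω Δ = n} = 1 := by
    simp_rw [hpmf]
    rw [← ENNReal.ofReal_tsum_of_nonneg hpmfpos hpmfsum]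
    have hval : ∑' n : ℕ, Real.exp (-lam) * lam ^ n / n.factorial = 1 := by
      have h1 : ∀ n : ℕ, Real.exp (-lam) * lam ^ n / n.factorial
          = Real.exp (-lam) * (lam ^ n / n.factorial) := fun n => by ring
      simp_rw [h1]
      rw [tsum_mul_left, exp_tsum', ← Real.exp_add, neg_add_cancel, Real.exp_zero]
    rw [hval, ENNReal.ofReal_one]
  have hae : AEMeasurable (fun ω => Y ω Δ) P :=
    aemeasurable_of_fibers (fun n =>
      nullmeas_partition P (fun n => {ω | Y ω Δ = n}) hcov hsum1 n)
  set Y' : Ω → ℕ := hae.mk _ with hY'def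
  have hY'meas : Measurable Y' := hae.measurable_mk
  have hYae : (fun ω => Y ω Δ) =ᵐ[P] Y' := hae.ae_eq_mk
  have hpmf' : ∀ n : ℕ, P {ω | Y' ω = n} = P {ω | Y ω Δ = n} := by
    intro n
    apply measure_congr
    filter_upwards [hYae] with ω h
    show (Y' ω = n) = (Y ω Δ = n)
    rw [h]
  -- Poisson moment bound for Y'
  obtain ⟨hsumf, hboundf⟩ := poisson_moment hlam hk
  set s := Real.log (1 + (k:ℝ) / lam) with hsdef
  have hs : 0 < s := Real.log_pos (by rw [lt_add_iff_pos_right]; positivity)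
  have hIY : ∫⁻ ω, (Y' ω : ℝ≥0∞) ^ k ∂P
      = ENNReal.ofReal (∑' n : ℕ, (n:ℝ)^k * (Real.exp (-lam) * lam^n / n.factorial)) := by
    rw [lintegral_pow_eq_tsum P Y' hY'meas k,
        ENNReal.ofReal_tsum_of_nonneg (fun n => by positivity) hsumf]
    refine tsum_congr fun n => ?_
    rw [hpmf' n, hpmf n, ENNReal.ofReal_mul (by positivity : (0:ℝ) ≤ (n:ℝ)^k),
        ENNReal.ofReal_pow (by positivity : (0:ℝ) ≤ (n:ℝ)), ENNReal.ofReal_natCast]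
  have hIYle : ∫⁻ ω, (Y' ω : ℝ≥0∞) ^ k ∂P ≤ ENNReal.ofReal (((k:ℝ)/s)^k) := by
    rw [hIY]; exact ENNReal.ofReal_le_ofReal hboundf
  -- Minkowski
  set IX := ∫⁻ ω, (X ω Δ : ℝ≥0∞) ^ k ∂P with hIXdef
  have hconvX : IX = ∫⁻ ω, (X ω Δ : ℝ≥0∞) ^ (k:ℝ) ∂P :=
    lintegral_congr fun ω => (ENNReal.rpow_natCast _ k).symm
  have hconvY : (∫⁻ ω, (Y' ω : ℝ≥0∞) ^ k ∂P) = ∫⁻ ω, (Y' ω : ℝ≥0∞) ^ (k:ℝ) ∂P :=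
    lintegral_congr fun ω => (ENNReal.rpow_natCast _ k).symm
  set A := IX ^ ((1:ℝ)/k) with hAdef
  set B := (∫⁻ ω, (Y' ω : ℝ≥0∞) ^ k ∂P) ^ ((1:ℝ)/k) with hBdef
  have hrpow_inv : ∀ x : ℝ≥0∞, (x ^ ((1:ℝ)/k)) ^ (k:ℝ) = x := fun x => by
    rw [← ENNReal.rpow_mul, one_div, inv_mul_cancel₀ hkne, ENNReal.rpow_one]
  have hrpow_inv' : ∀ x : ℝ≥0∞, (x ^ (k:ℝ)) ^ ((1:ℝ)/k) = x := fun x => by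
    rw [← ENNReal.rpow_mul, mul_one_div, div_self hkne, ENNReal.rpow_one]
  have hY'm : Measurable (fun ω => (Y' ω : ℝ≥0∞)) := measurable_from_top.comp hY'meas
  have key : (∫⁻ ω, ((X ω Δ : ℝ≥0∞) + (Y ω Δ : ℝ≥0∞)) ^ k ∂P) ≤ (A + B) ^ (k:ℝ) := by
    rw [MeasureTheory.lintegral]
    refine iSup₂_le fun φ hφ => ?_
    have hφle : ∀ ω, (φ ω) ^ ((1:ℝ)/k) ≤ (X ω Δ : ℝ≥0∞) + (Y ω Δ : ℝ≥0∞) := by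
      intro ω
      have h1 : φ ω ≤ ((X ω Δ : ℝ≥0∞) + (Y ω Δ : ℝ≥0∞)) ^ (k:ℝ) := by
        rw [ENNReal.rpow_natCast]; exact hφ ω
      calc (φ ω) ^ ((1:ℝ)/k)
          ≤ (((X ω Δ : ℝ≥0∞) + (Y ω Δ : ℝ≥0∞)) ^ (k:ℝ)) ^ ((1:ℝ)/k) :=
            ENNReal.rpow_le_rpow h1 (by positivity)
        _ = _ := hrpow_inv' _
    set g : Ω → ℝ≥0∞ := fun ω => (φ ω) ^ ((1:ℝ)/k) - (Y' ω : ℝ≥0∞) with hgdef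
    have hgm : Measurable g := (φ.measurable.pow_const _).sub hY'm
    have hgleX : ∀ᵐ ω ∂P, g ω ≤ (X ω Δ : ℝ≥0∞) := by
      filter_upwards [hYae] with ω h
      exact tsub_le_iff_right.2 (h ▸ hφle ω)
    have hmink := ENNReal.lintegral_Lp_add_le (μ := P) hgm.aemeasurable hY'm.aemeasurable
      (by exact_mod_cast hk : (1:ℝ) ≤ (k:ℝ))
    calc φ.lintegral P = ∫⁻ ω, φ ω ∂P := (SimpleFunc.lintegral_eq_lintegral φ P).symm
      _ = ∫⁻ ω, ((φ ω) ^ ((1:ℝ)/k)) ^ (k:ℝ) ∂P := lintegral_congr fun ω => (hrpow_inv _).symm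
      _ ≤ ∫⁻ ω, (g ω + (Y' ω : ℝ≥0∞)) ^ (k:ℝ) ∂P :=
          lintegral_mono fun ω => ENNReal.rpow_le_rpow le_tsub_add hk0.le
      _ = ((∫⁻ ω, (g ω + (Y' ω : ℝ≥0∞)) ^ (k:ℝ) ∂P) ^ ((1:ℝ)/k)) ^ (k:ℝ) := (hrpow_inv _).symm
      _ ≤ (A + B) ^ (k:ℝ) := by
          refine ENNReal.rpow_le_rpow (hmink.trans (add_le_add ?_ ?_)) hk0.le
          · refine ENNReal.rpow_le_rpow ?_ (by positivity)
            refine le_trans (lintegral_mono_ae ?_) (le_of_eq hconvX.symm)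
            filter_upwards [hgleX] with ω h
            exact ENNReal.rpow_le_rpow h hk0.le
          · exact le_of_eq (by rw [hBdef, hconvY])
  -- finiteness
  have hIXle : IX ≤ ∫⁻ ω, ((X ω Δ : ℝ≥0∞) + (Y ω Δ : ℝ≥0∞)) ^ k ∂P := by
    refine lintegral_mono fun ω => ?_
    gcongr
    exact le_self_add
  have hIXne : IX ≠ ⊤ := fun h => hI (top_le_iff.1 (h ▸ hIXle))
  have hAne : A ≠ ⊤ := ENNReal.rpow_ne_top_of_nonneg (by positivity) hIXne
  have hBle : B ≤ ENNReal.ofReal ((k:ℝ)/s) := by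
    rw [hBdef]
    calc (∫⁻ ω, (Y' ω : ℝ≥0∞) ^ k ∂P) ^ ((1:ℝ)/k)
        ≤ (ENNReal.ofReal (((k:ℝ)/s)^k)) ^ ((1:ℝ)/k) :=
          ENNReal.rpow_le_rpow hIYle (by positivity)
      _ = ENNReal.ofReal ((k:ℝ)/s) := by
          rw [ENNReal.ofReal_pow (by positivity : (0:ℝ) ≤ (k:ℝ)/s),
            ← ENNReal.rpow_natCast (ENNReal.ofReal ((k:ℝ)/s)) k, hrpow_inv']
  have hBne : B ≠ ⊤ := (hBle.trans_lt ENNReal.ofReal_lt_top).ne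
  have hABne : (A + B) ≠ ⊤ := ENNReal.add_ne_top.2 ⟨hAne, hBne⟩
  -- pass to real numbers
  have h1 : (∫⁻ ω, ((X ω Δ : ℝ≥0∞) + (Y ω Δ : ℝ≥0∞)) ^ k ∂P).toReal
      ≤ ((A + B).toReal) ^ (k:ℝ) := by
    have := ENNReal.toReal_mono (ENNReal.rpow_ne_top_of_nonneg hk0.le hABne) key
    rwa [← ENNReal.toReal_rpow] at this
  have h3 : (∫⁻ ω, ((X ω Δ : ℝ≥0∞) + (Y ω Δ : ℝ≥0∞)) ^ k ∂P).toReal ^ ((1:ℝ)/k)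
      ≤ A.toReal + B.toReal := by
    have h2 := Real.rpow_le_rpow ENNReal.toReal_nonneg h1 (by positivity : (0:ℝ) ≤ 1/k)
    rwa [← Real.rpow_mul ENNReal.toReal_nonneg, mul_one_div, div_self hkne, Real.rpow_one,
      ENNReal.toReal_add hAne hBne] at h2
  refine h3.trans ?_
  -- bound A.toReal
  have hAval : A.toReal = IX.toReal ^ ((1:ℝ)/k) := (ENNReal.toReal_rpow _ _).symm
  have hAbound : A.toReal ≤ c₃ * c₂ ^ (V/(k:ℝ)) * k / Real.log (1 + k / (c₁ * V)) := by
    rw [hAval]; exact hX Δ hΔ hV0 hVtop k hk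
  have hlogc₁ : 0 < Real.log (1 + (k:ℝ) / (c₁ * V)) := by
    apply Real.log_pos
    rw [lt_add_iff_pos_right]
    positivity
  have hA2 : A.toReal ≤ c₃ * c₂ ^ (V/(k:ℝ)) * k / L := by
    refine hAbound.trans ?_
    refine div_mono_denom (by positivity) hL ?_
    rw [hLdef]
    refine Real.log_le_log (by positivity) ?_
    have h9 : (k:ℝ) / (M * V) ≤ (k:ℝ) / (c₁ * V) :=
      div_mono_denom hk0.le (by positivity) (by nlinarith [le_max_left c₁ (t*b)])
    linarith
  -- bound B.toReal
  have hBreal : B.toReal ≤ (k:ℝ)/s := by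
    have := ENNReal.toReal_mono ENNReal.ofReal_ne_top hBle
    rwa [ENNReal.toReal_ofReal (by positivity)] at this
  have hlogtb : 0 < Real.log (1 + (k:ℝ) / (t * b * V)) := by
    apply Real.log_pos
    rw [lt_add_iff_pos_right]
    positivity
  have hB2 : B.toReal ≤ c₂ ^ (V/(k:ℝ)) * k / L := by
    refine hBreal.trans ?_
    have hstep1 : (k:ℝ)/s ≤ (k:ℝ) / Real.log (1 + (k:ℝ) / (t * b * V)) := by
      refine div_mono_denom hk0.le hlogtb ?_
      rw [hsdef]
      refine Real.log_le_log (by positivity) ?_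
      have h9 : (k:ℝ) / (t * b * V) ≤ (k:ℝ) / lam :=
        div_mono_denom hk0.le hlam hlamle
      linarith
    have hstep2 : (k:ℝ) / Real.log (1 + (k:ℝ) / (t * b * V)) ≤ (k:ℝ) / L := by
      refine div_mono_denom hk0.le hL ?_
      rw [hLdef]
      refine Real.log_le_log (by positivity) ?_
      have h9 : (k:ℝ) / (M * V) ≤ (k:ℝ) / (t * b * V) :=
        div_mono_denom hk0.le (by positivity) (by nlinarith [le_max_right c₁ (t*b)])
      linarith
    have hstep3 : (k:ℝ) / L ≤ c₂ ^ (V/(k:ℝ)) * k / L := by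
      rw [mul_div_assoc]
      exact le_mul_of_one_le_left (by positivity) hc₂V
    exact hstep1.trans (hstep2.trans hstep3)
  calc A.toReal + B.toReal
      ≤ c₃ * c₂ ^ (V/(k:ℝ)) * k / L + c₂ ^ (V/(k:ℝ)) * k / L := add_le_add hA2 hB2
    _ = (c₃ + 1) * c₂ ^ (V/(k:ℝ)) * k / L := by ring
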